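/- Let V be a real polynomial of degree d ≥ 2 all of whose roots are real and nonzero. If the coefficient of x^k in V vanishes for some 1 ≤ k ≤ d-1, then the coefficients of x^{k-1} and x^{k+1} are nonzero and have opposite signs. -/

import Mathlib

open Polynomial

private lemma sum_count_le (S : Finset ℝ) (M : Multiset ℝ) :
    ∑ x ∈ S, M.count x ≤ Multiset.card M := by
  classical
  calc ∑ x ∈ S, M.count x ≤ ∑ x ∈ S ∪ M.toFinset, M.count x :=
        Finset.sum_le_sum_of_subset Finset.subset_union_left
    _ = ∑ x ∈ M.toFinset, M.count x := by
        refine (Finset.sum_subset Finset.subset_union_right ?_).symm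
        intro x _ hx
        exact Multiset.count_eq_zero.2 fun h => hx (Multiset.mem_toFinset.2 h)
    _ = Multiset.card M := M.toFinset_sum_count_eq

/-- Key counting lemma: a hyperbolic polynomial of degree ≥ 2 with vanishing
coefficients at 1 and 2 has vanishing constant coefficient. -/
private lemma key (p : ℝ[X]) (hcard : Multiset.card p.roots = p.natDegree)
    (hdeg : 2 ≤ p.natDegree) (h1 : p.coeff 1 = 0) (h2 : p.coeff 2 = 0) :
    p.coeff 0 = 0 := by
  classical
  by_contra h0
  have hp : p ≠ 0 := fun h => by simp [h] at hdeg
  set q := derivative p with hq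
  have hq0 : q ≠ 0 := by
    intro h
    have := natDegree_eq_zero_of_derivative_eq_zero h
    omega
  have hcardq : Multiset.card q.roots ≤ p.natDegree - 1 :=
    le_trans (card_roots' q) (natDegree_derivative_le p)
  have hdvd : X ^ 2 ∣ q := by
    rw [X_pow_dvd_iff]
    intro d hd
    interval_cases d
    · rw [hq, coeff_derivative, h1, zero_mul]
    · rw [hq, coeff_derivative, h2, zero_mul]
  have hmult : 2 ≤ q.rootMultiplicity 0 := by
    rw [le_rootMultiplicity_iff hq0]
    simpa using hdvd
  have h0root : (0 : ℝ) ∈ q.roots := by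
    rw [mem_roots', IsRoot, ← coeff_zero_eq_eval_zero]
    refine ⟨hq0, ?_⟩
    rw [hq, coeff_derivative, h1, zero_mul]
  set A := p.roots.toFinset with hA
  set B := q.roots.toFinset \ A with hB
  have hAB : A.card ≤ B.card + 1 :=
    p.card_roots_toFinset_le_card_roots_derivative_diff_roots_succ
  have h0A : (0 : ℝ) ∉ A := by
    rw [hA, Multiset.mem_toFinset, mem_roots', IsRoot, ← coeff_zero_eq_eval_zero]
    exact fun h => h0 h.2
  have h0B : (0 : ℝ) ∈ B := Finset.mem_sdiff.2 ⟨Multiset.mem_toFinset.2 h0root, h0A⟩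
  have hsumA : p.natDegree ≤ (∑ r ∈ A, q.roots.count r) + A.card := by
    have e1 : p.natDegree = ∑ r ∈ A, p.roots.count r := by
      rw [← hcard, ← Multiset.toFinset_sum_count_eq]
    have e2 : ∀ r ∈ A, p.roots.count r ≤ q.roots.count r + 1 := by
      intro r _
      have h3 := rootMultiplicity_sub_one_le_derivative_rootMultiplicity p r
      rw [← hq] at h3
      rw [count_roots, count_roots]
      omega
    calc p.natDegree = ∑ r ∈ A, p.roots.count r := e1
      _ ≤ ∑ r ∈ A, (q.roots.count r + 1) := Finset.sum_le_sum e2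
      _ = (∑ r ∈ A, q.roots.count r) + A.card := by
          rw [Finset.sum_add_distrib, Finset.sum_const, smul_eq_mul, mul_one]
  have hsumB : B.card + 1 ≤ ∑ r ∈ B, q.roots.count r := by
    have hsplit : q.roots.count 0 + ∑ r ∈ B.erase 0, q.roots.count r
        = ∑ r ∈ B, q.roots.count r := Finset.add_sum_erase B (fun r => q.roots.count r) h0B
    have hcount0 : 2 ≤ q.roots.count 0 := by rw [count_roots]; exact hmult
    have hrest : B.card - 1 ≤ ∑ r ∈ B.erase 0, q.roots.count r := by
      have : (B.erase 0).card • 1 ≤ ∑ r ∈ B.erase 0, q.roots.count r := by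
        refine Finset.card_nsmul_le_sum _ _ _ ?_
        intro x hx
        have hx' : x ∈ q.roots.toFinset := (Finset.mem_sdiff.1 (Finset.mem_of_mem_erase hx)).1
        have := Multiset.mem_toFinset.1 hx'
        exact Multiset.one_le_count_iff_mem.2 this
      rw [Finset.card_erase_of_mem h0B] at this
      simpa using this
    omega
  have htot : (∑ r ∈ A, q.roots.count r) + ∑ r ∈ B, q.roots.count r
      ≤ Multiset.card q.roots := by
    rw [← Finset.sum_union Finset.disjoint_sdiff]
    exact sum_count_le _ _
  omega

/-- iterated derivatives of hyperbolic polynomials are hyperbolic. -/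
private lemma hyp_iter (p : ℝ[X]) (h : Multiset.card p.roots = p.natDegree) :
    ∀ j, j ≤ p.natDegree → (derivative^[j] p).natDegree = p.natDegree - j ∧
      Multiset.card (derivative^[j] p).roots = p.natDegree - j := by
  intro j
  induction j with
  | zero => intro _; exact ⟨by simp, by simpa using h⟩
  | succ j ih =>
    intro hj
    obtain ⟨hdeg, hcard⟩ := ih (by omega)
    set q := derivative^[j] p with hqdef
    have h1 : Multiset.card q.roots ≤ Multiset.card (derivative q).roots + 1 :=
      card_roots_le_derivative q
    have h2 : Multiset.card (derivative q).roots ≤ (derivative q).natDegree :=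
      card_roots' _
    have h3 : (derivative q).natDegree ≤ q.natDegree - 1 := natDegree_derivative_le q
    have h4 : derivative^[j+1] p = derivative q := by
      rw [hqdef, Function.iterate_succ_apply']
    rw [h4]
    omega

/-- No two consecutive vanishing coefficients. -/
private lemma no_consec (V : ℝ[X]) (hhyp : Multiset.card V.roots = V.natDegree)
    (h0 : V.coeff 0 ≠ 0) :
    ∀ j, j ≤ V.natDegree - 1 → V.coeff j = 0 → V.coeff (j + 1) = 0 → False := by
  intro j
  induction j with
  | zero => intro _ hj0 _; exact h0 hj0
  | succ j ih =>
    intro hj hcj hcj1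
    have hd0 : V.natDegree ≠ 0 := by
      intro h; rw [h] at hj; omega
    have hd2 : j + 2 ≤ V.natDegree := by omega
    obtain ⟨hdq, hcq⟩ := hyp_iter V hhyp j (by omega)
    set q := derivative^[j] V with hqdef
    have hq2 : 2 ≤ q.natDegree := by omega
    have h1 : q.coeff 1 = 0 := by
      rw [hqdef, coeff_iterate_derivative]
      have e : 1 + j = j + 1 := by omega
      rw [e, hcj]
      simp
    have h2 : q.coeff 2 = 0 := by
      rw [hqdef, coeff_iterate_derivative]
      have e : 2 + j = j + 1 + 1 := by omega
      rw [e, hcj1]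
      simp
    have h0q : q.coeff 0 = 0 := key q (by omega) hq2 h1 h2
    have hVj : V.coeff j = 0 := by
      rw [hqdef, coeff_iterate_derivative] at h0q
      have e : 0 + j = j := by omega
      rw [e] at h0q
      rcases smul_eq_zero.1 h0q with h | h
      · exfalso
        have : j < j := Nat.descFactorial_eq_zero_iff_lt.1 (by exact_mod_cast h)
        omega
      · exact h
    exact ih (by omega) hVj hcj

private lemma esymm_one' (t : Multiset ℝ) : t.esymm 1 = t.sum := by
  rw [Multiset.esymm, Multiset.powersetCard_one, Multiset.map_map]
  simp

private lemma esymm_two' (t : Multiset ℝ) :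
    t.sum ^ 2 = (t.map fun x => x ^ 2).sum + 2 * t.esymm 2 := by
  induction t using Multiset.induction with
  | empty => simp [Multiset.esymm, Multiset.powersetCard_zero_right 1]
  | cons a t ih =>
    have he : (a ::ₘ t).esymm 2 = t.esymm 2 + a * t.sum := by
      have h2 : (2 : ℕ) = 1 + 1 := rfl
      rw [Multiset.esymm, h2, Multiset.powersetCard_cons, Multiset.map_add, Multiset.sum_add,
        Multiset.map_map, Multiset.powersetCard_one, Multiset.map_map]
      simp only [Function.comp_def, Multiset.prod_cons, Multiset.prod_singleton]
      rw [← h2, ← Multiset.esymm]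
      congr 1
      clear ih
      induction t using Multiset.induction with
      | empty => simp
      | cons b t ihh => simp only [Multiset.map_cons, Multiset.sum_cons, ihh]; ring
    rw [Multiset.sum_cons, Multiset.map_cons, Multiset.sum_cons, he]
    nlinarith [ih]

private lemma reverse_X_sub_C' (b : ℝ) : (X - C b).reverse = C (-b) * X + 1 := by
  ext n
  rw [coeff_reverse, natDegree_X_sub_C]
  match n with
  | 0 => simp [revAt_le]
  | 1 => simp [revAt_le, coeff_one]
  | (n + 2) =>
    rw [revAt_eq_self_of_lt (by omega)]
    rw [coeff_add, coeff_one, coeff_C_mul, coeff_X]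
    simp only [show ¬(n + 2 = 0) by omega, show (1 : ℕ) ≠ n + 2 by omega, if_false]
    rw [coeff_sub, coeff_X, coeff_C]
    simp only [show ¬(n + 2 = 0) by omega, show (1 : ℕ) ≠ n + 2 by omega, if_false]
    ring

private lemma prod_rev (s : Multiset ℝ) (hs : (0 : ℝ) ∉ s) :
    (s.map fun r => X - C r).prod =
      C ((s.map fun r => -r).prod) * ((s.map fun r => X - C r⁻¹).prod).reverse := by
  induction s using Multiset.induction with
  | empty =>
    simp only [Multiset.map_zero, Multiset.prod_zero, map_one, one_mul]
    rw [← Polynomial.C_1, reverse_C]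
  | cons a s ih =>
    have ha : a ≠ 0 := fun h => hs (h ▸ Multiset.mem_cons_self a s)
    have hs' : (0 : ℝ) ∉ s := fun h => hs (Multiset.mem_cons_of_mem h)
    simp only [Multiset.map_cons, Multiset.prod_cons]
    rw [reverse_mul_of_domain, ih hs', reverse_X_sub_C', map_mul]
    have hXa : X - C a = C (-a) * (C (-a⁻¹) * X + 1) := by
      rw [mul_add, mul_one, ← mul_assoc, ← C_mul]
      rw [show (-a) * (-a⁻¹) = a * a⁻¹ by ring, mul_inv_cancel₀ ha]
      rw [C_1, one_mul, map_neg]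
      ring
    rw [hXa]
    ring

private lemma sign_key (p : ℝ[X]) (hcard : Multiset.card p.roots = p.natDegree)
    (hdeg : 2 ≤ p.natDegree) (h0 : p.coeff 0 ≠ 0) (h1 : p.coeff 1 = 0) :
    p.coeff 0 * p.coeff 2 < 0 := by
  have hp : p ≠ 0 := fun h => by simp [h] at hdeg
  set m := p.natDegree with hm
  set s := p.roots with hs
  have h0s : (0 : ℝ) ∉ s := by
    intro h
    apply h0
    rw [coeff_zero_eq_eval_zero]
    exact (mem_roots'.1 h).2
  have hfac := C_leadingCoeff_mul_prod_multiset_X_sub_C hcard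
  have hrev := prod_rev s h0s
  set t := s.map (fun r : ℝ => r⁻¹) with ht
  have hts : Multiset.card t = m := by rw [ht, Multiset.card_map, hs, hcard]
  set G := (s.map fun r => X - C r⁻¹).prod with hG
  have hGt : G = (t.map fun u => X - C u).prod := by
    rw [hG, ht, Multiset.map_map]
    rfl
  have hGdeg : G.natDegree = m := by
    rw [hGt, natDegree_multiset_prod_X_sub_C_eq_card, hts]
  set c := p.leadingCoeff * (s.map fun r => -r).prod with hc
  have hcne : c ≠ 0 := by
    refine mul_ne_zero (leadingCoeff_ne_zero.2 hp) ?_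
    rw [Ne, Multiset.prod_eq_zero_iff]
    intro hmem
    obtain ⟨r, hr, hr0⟩ := Multiset.mem_map.1 hmem
    have : r = 0 := by linarith [hr0]
    exact h0s (this ▸ hr)
  have hcoeff : ∀ j, j ≤ m → p.coeff j = c * G.coeff (m - j) := by
    intro j hj
    conv_lhs => rw [← hfac]
    rw [coeff_C_mul, hrev, coeff_C_mul, coeff_reverse, hGdeg, revAt_le hj, hc]
    ring
  have hmonic : G.Monic := by
    rw [hGt]
    exact monic_multiset_prod_of_monic _ _ fun u _ => monic_X_sub_C u
  have hGm : G.coeff m = 1 := by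
    have := hmonic.coeff_natDegree
    rwa [hGdeg] at this
  have hc0 : p.coeff 0 = c := by
    rw [hcoeff 0 (by omega), Nat.sub_zero, hGm, mul_one]
  have hcoef1 : G.coeff (m - 1) = -t.sum := by
    rw [hGt, Multiset.prod_X_sub_C_coeff t (by omega : m - 1 ≤ Multiset.card t)]
    rw [hts, show m - (m - 1) = 1 by omega, esymm_one', pow_one]
    ring
  have hcoef2 : G.coeff (m - 2) = t.esymm 2 := by
    rw [hGt, Multiset.prod_X_sub_C_coeff t (by omega : m - 2 ≤ Multiset.card t)]
    rw [hts, show m - (m - 2) = 2 by omega]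
    ring_nf
  have hsum0 : t.sum = 0 := by
    have := hcoeff 1 (by omega)
    rw [h1, hcoef1] at this
    have := (mul_eq_zero.1 this.symm).resolve_left hcne
    linarith [this]
  have htne : t ≠ 0 := by
    intro h
    rw [h] at hts
    simp at hts
    omega
  have hsq : 0 < (t.map fun x => x ^ 2).sum := by
    obtain ⟨a, ha⟩ := Multiset.exists_mem_of_ne_zero htne
    obtain ⟨t', htt⟩ := Multiset.exists_cons_of_mem ha
    rw [htt, Multiset.map_cons, Multiset.sum_cons]
    have ha' : a ∈ Multiset.map (fun r : ℝ => r⁻¹) s := ha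
    obtain ⟨r, hrs, hra⟩ := Multiset.mem_map.1 ha'
    have hr0 : r ≠ 0 := fun h => h0s (h ▸ hrs)
    have ha0 : a ≠ 0 := by rw [← hra]; exact inv_ne_zero hr0
    have h1 : 0 < a ^ 2 := by positivity
    have h2 : 0 ≤ (t'.map fun x => x ^ 2).sum :=
      Multiset.sum_nonneg fun x hx => by
        obtain ⟨y, _, rfl⟩ := Multiset.mem_map.1 hx
        positivity
    linarith
  have he2 : t.esymm 2 < 0 := by nlinarith [esymm_two' t]
  have hc2 : p.coeff 2 = c * t.esymm 2 := by
    rw [hcoeff 2 (by omega), hcoef2]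
  rw [hc0, hc2]
  have : 0 < c * c := mul_self_pos.2 hcne
  nlinarith

theorem stmt_3 (V : Polynomial ℝ) (hd : 2 ≤ V.natDegree)
    (hhyp : (V.roots.card : ℕ) = V.natDegree) (h0 : V.eval 0 ≠ 0)
    (k : ℕ) (hk1 : 1 ≤ k) (hk2 : k ≤ V.natDegree - 1) (hzero : V.coeff k = 0) :
    V.coeff (k-1) ≠ 0 ∧ V.coeff (k+1) ≠ 0 ∧ V.coeff (k-1) * V.coeff (k+1) < 0 := by
  have hhyp' : Multiset.card V.roots = V.natDegree := hhyp
  have hV0 : V.coeff 0 ≠ 0 := by rw [coeff_zero_eq_eval_zero]; exact h0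
  have hA : V.coeff (k - 1) ≠ 0 := by
    intro hzero'
    have e : k - 1 + 1 = k := by omega
    exact no_consec V hhyp' hV0 (k - 1) (by omega) hzero' (by rw [e]; exact hzero)
  obtain ⟨hdP, hcP⟩ := hyp_iter V hhyp' (k - 1) (by omega)
  set P := derivative^[k - 1] V with hP
  have hPdeg2 : 2 ≤ P.natDegree := by omega
  have e0 : 0 + (k - 1) = k - 1 := by omega
  have e1 : 1 + (k - 1) = k := by omega
  have e2 : 2 + (k - 1) = k + 1 := by omega
  have hP0 : P.coeff 0 = ((k - 1).descFactorial (k - 1) : ℝ) * V.coeff (k - 1) := by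
    rw [hP, coeff_iterate_derivative, e0, nsmul_eq_mul]
  have hP1 : P.coeff 1 = 0 := by
    rw [hP, coeff_iterate_derivative, e1, hzero, smul_zero]
  have hP2 : P.coeff 2 = ((k + 1).descFactorial (k - 1) : ℝ) * V.coeff (k + 1) := by
    rw [hP, coeff_iterate_derivative, e2, nsmul_eq_mul]
  have hc1pos : (0 : ℝ) < ((k - 1).descFactorial (k - 1) : ℝ) := by
    have h : 0 < (k - 1).descFactorial (k - 1) :=
      Nat.pos_of_ne_zero fun h => by
        have := Nat.descFactorial_eq_zero_iff_lt.1 h; omega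
    exact_mod_cast h
  have hc2pos : (0 : ℝ) < ((k + 1).descFactorial (k - 1) : ℝ) := by
    have h : 0 < (k + 1).descFactorial (k - 1) :=
      Nat.pos_of_ne_zero fun h => by
        have := Nat.descFactorial_eq_zero_iff_lt.1 h; omega
    exact_mod_cast h
  have hP0ne : P.coeff 0 ≠ 0 := by
    rw [hP0]; exact mul_ne_zero (ne_of_gt hc1pos) hA
  have hsign := sign_key P (by rw [hcP, hdP]) hPdeg2 hP0ne hP1
  rw [hP0, hP2] at hsign
  have hprod : V.coeff (k - 1) * V.coeff (k + 1) < 0 := by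
    by_contra hge
    push_neg at hge
    nlinarith [mul_pos hc1pos hc2pos]
  refine ⟨hA, ?_, hprod⟩
  intro h
  rw [h, mul_zero] at hprod
  exact lt_irrefl 0 hprod
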